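/- Verifying boundary independence reduces to pairwise distance checks: a broadcast f on a connected graph G is boundary independent if and only if, for every pair of distinct broadcasting vertices u and v, f(u) + f(v) ≤ d_G(u, v). Consequently, if f is boundary independent then any u hearing two distinct broadcasting vertices v, w (d(u,v) ≤ f(v) and d(u,w) ≤ f(w)) satisfies d(u,v) = f(v) and d(u,w) = f(w). -/
import Mathlib


open SimpleGraph Finset

/-- The eccentricity of a vertex: the maximum distance to any other vertex. -/
noncomputable def ecc {V : Type*} [Fintype V] (G : SimpleGraph V) (v : V) : ℕ :=
  Finset.univ.sup fun u => G.dist v u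

/-- A broadcast: each vertex broadcasts with strength at most its eccentricity. -/
def IsBroadcast {V : Type*} [Fintype V] (G : SimpleGraph V) (f : V → ℕ) : Prop :=
  ∀ v, f v ≤ ecc G v

/-- A boundary independent broadcast. -/
def IsBnIndep {V : Type*} [Fintype V] (G : SimpleGraph V) (f : V → ℕ) : Prop :=
  IsBroadcast G f ∧ ∀ u v, u ≠ v → 1 ≤ f u → 1 ≤ f v → f u + f v ≤ G.dist u v

/-- The maximum cost of a boundary independent broadcast. -/
noncomputable def alphaBn {V : Type*} [Fintype V] (G : SimpleGraph V) : ℕ :=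
  sSup {k | ∃ f : V → ℕ, IsBnIndep G f ∧ ∑ v, f v = k}

/-- The independence number. -/
noncomputable def indepNum {V : Type*} [Fintype V] (G : SimpleGraph V) : ℕ :=
  sSup {k | ∃ s : Finset V, (∀ u ∈ s, ∀ v ∈ s, u ≠ v → ¬ G.Adj u v) ∧ s.card = k}

lemma dist_getVert_le' {V : Type*} {G : SimpleGraph V} (hG : G.Connected)
    {u v : V} (p : G.Walk u v) (i : ℕ) : G.dist u (p.getVert i) ≤ i := by
  induction p generalizing i with
  | nil => simp [SimpleGraph.Walk.getVert, SimpleGraph.dist_self]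
  | cons h q ih =>
    cases i with
    | zero => simp [SimpleGraph.Walk.getVert]
    | succ n =>
      calc G.dist _ _ ≤ G.dist _ _ + G.dist _ (q.getVert n) := hG.dist_triangle
        _ ≤ 1 + n := by
            refine add_le_add ?_ (ih n)
            exact SimpleGraph.dist_le (SimpleGraph.Walk.cons h SimpleGraph.Walk.nil)
        _ = n + 1 := by omega

lemma dist_getVert_le2' {V : Type*} {G : SimpleGraph V} (hG : G.Connected)
    {u v : V} (p : G.Walk u v) (i : ℕ) (hi : i ≤ p.length) :
    G.dist (p.getVert i) v ≤ p.length - i := by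
  have h1 := dist_getVert_le' hG p.reverse (p.length - i)
  rw [SimpleGraph.Walk.getVert_reverse] at h1
  have : p.length - (p.length - i) = i := by omega
  rw [this] at h1
  rw [G.dist_comm]
  exact h1

theorem bnIndep_iff_pairwise_dist {V : Type*} [Fintype V]
    (G : SimpleGraph V) (hG : G.Connected) (f : V → ℕ) (hb : IsBroadcast G f) :
    ((∀ v, 1 ≤ f v → ∀ u, G.dist u v < f v →
        ∀ w, w ≠ v → 1 ≤ f w → ¬ G.dist u w ≤ f w) ↔
      (∀ u v, u ≠ v → 1 ≤ f u → 1 ≤ f v → f u + f v ≤ G.dist u v)) ∧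
    (IsBnIndep G f → ∀ u v w, v ≠ w → 1 ≤ f v → 1 ≤ f w →
      G.dist u v ≤ f v → G.dist u w ≤ f w →
      G.dist u v = f v ∧ G.dist u w = f w) := by
  constructor
  · constructor
    · intro h u v huv hfu hfv
      by_contra hlt
      push_neg at hlt
      obtain ⟨p, hp⟩ := (hG u v).exists_walk_length_eq_dist
      by_cases hcase : G.dist u v ≤ f u - 1
      · -- x = v : d(v,u) < f u and d(v,v)=0 ≤ f v
        have h1 : G.dist v u < f u := by rw [G.dist_comm]; omega
        exact h u hfu v h1 v (huv.symm) hfv (by simp [SimpleGraph.dist_self])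
      · push_neg at hcase
        set x := p.getVert (f u - 1) with hx
        have hxu : G.dist u x ≤ f u - 1 := dist_getVert_le' hG p _
        have hxv : G.dist x v ≤ p.length - (f u - 1) :=
          dist_getVert_le2' hG p _ (by omega)
        have hxu' : G.dist x u < f u := by rw [G.dist_comm]; omega
        have hxv' : G.dist x v ≤ f v := by omega
        exact h u hfu x hxu' v huv.symm hfv hxv'
    · intro h v hfv u hu w hwv hfw hdw
      have := h v w (fun e => hwv (e.symm)) hfv hfw
      have := hG.dist_triangle (u := v) (v := u) (w := w)
      rw [show G.dist v u = G.dist u v from G.dist_comm] at this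
      omega
  · rintro ⟨_, h2⟩ u v w hvw hfv hfw hdv hdw
    have := h2 v w hvw hfv hfw
    have := hG.dist_triangle (u := v) (v := u) (w := w)
    rw [show G.dist v u = G.dist u v from G.dist_comm] at this
    omega
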